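/- arXiv:1911.08984 — 12 statements merged into one kernel-verified Lean document; each statement's English description precedes it below -/
import Mathlib

section
/- The pointwise infimum of a chain (a family totally ordered by the pointwise order) of 𝒯-quasiconvex functions f_α : D → [-∞, +∞) is 𝒯-quasiconvex. -/
/-- The pointwise infimum of a chain of `𝒯`-quasiconvex functions is
`𝒯`-quasiconvex. -/
theorem stmt3 {X : Type*} [AddCommGroup X] (𝒯 : Set (X →+ X)) (D : Set X)
    (hD : ∀ T ∈ 𝒯, ∀ x ∈ D, ∀ y ∈ D, T x + (y - T y) ∈ D)
    {ι : Type*} [Nonempty ι] (f : ι → X → EReal)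
    (hchain : ∀ i j, (∀ x ∈ D, f i x ≤ f j x) ∨ (∀ x ∈ D, f j x ≤ f i x))
    (hqc : ∀ i, ∀ T ∈ 𝒯, ∀ x ∈ D, ∀ y ∈ D, f i (T x + (y - T y)) ≤ max (f i x) (f i y)) :
    ∀ T ∈ 𝒯, ∀ x ∈ D, ∀ y ∈ D,
      (⨅ i, f i (T x + (y - T y))) ≤ max (⨅ i, f i x) (⨅ i, f i y) := by
  intro T hT x hx y hy
  by_contra h
  push_neg at h
  set z := T x + (y - T y) with hz
  have hA : (⨅ i, f i x) < ⨅ i, f i z := lt_of_le_of_lt (le_max_left _ _) h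
  have hB : (⨅ i, f i y) < ⨅ i, f i z := lt_of_le_of_lt (le_max_right _ _) h
  obtain ⟨i, hi⟩ := iInf_lt_iff.mp hA
  obtain ⟨j, hj⟩ := iInf_lt_iff.mp hB
  rcases hchain i j with hij | hij
  · have h1 : f i z ≤ max (f i x) (f i y) := hqc i T hT x hx y hy
    have h2 : (⨅ k, f k z) ≤ f i z := iInf_le _ i
    have h3 : f i y < ⨅ k, f k z := lt_of_le_of_lt (hij y hy) hj
    exact absurd ((h2.trans h1).trans_lt (max_lt hi h3)) (lt_irrefl _)
  · have h1 : f j z ≤ max (f j x) (f j y) := hqc j T hT x hx y hy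
    have h2 : (⨅ k, f k z) ≤ f j z := iInf_le _ j
    have h3 : f j x < ⨅ k, f k z := lt_of_le_of_lt (hij x hx) hi
    exact absurd ((h2.trans h1).trans_lt (max_lt h3 hj)) (lt_irrefl _)
end

section
/- If f : D → [-∞, +∞) and g : E → [-∞, +∞) are 𝒯-quasiconvex functions on 𝒯-convex sets D, E ⊆ X, then the infimal max-convolution (f ◇ g)(x) := inf{ max(f(u), g(v)) : u ∈ D, v ∈ E, u + v = x } is 𝒯-quasiconvex on D + E. -/
open scoped Pointwise

/-- The infimal max-convolution of two `𝒯`-quasiconvex functions is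
`𝒯`-quasiconvex on `D + E`. -/
theorem stmt4 {X : Type*} [AddCommGroup X] (𝒯 : Set (X →+ X)) (h𝒯 : 𝒯.Nonempty)
    (D E : Set X)
    (hD : ∀ T ∈ 𝒯, ∀ x ∈ D, ∀ y ∈ D, T x + (y - T y) ∈ D)
    (hE : ∀ T ∈ 𝒯, ∀ x ∈ E, ∀ y ∈ E, T x + (y - T y) ∈ E)
    (f g : X → EReal) (hftop : ∀ x ∈ D, f x ≠ ⊤) (hgtop : ∀ x ∈ E, g x ≠ ⊤)
    (hf : ∀ T ∈ 𝒯, ∀ x ∈ D, ∀ y ∈ D, f (T x + (y - T y)) ≤ max (f x) (f y))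
    (hg : ∀ T ∈ 𝒯, ∀ x ∈ E, ∀ y ∈ E, g (T x + (y - T y)) ≤ max (g x) (g y))
    (h : X → EReal)
    (hdef : ∀ x, h x = sInf {m : EReal | ∃ u ∈ D, ∃ v ∈ E, u + v = x ∧ m = max (f u) (g v)}) :
    ∀ T ∈ 𝒯, ∀ x ∈ D + E, ∀ y ∈ D + E,
      h (T x + (y - T y)) ≤ max (h x) (h y) := by
  intro T hT x hx y hy
  -- key: for all members of the two inf-sets, h z is ≤ their max
  have key : ∀ m₁ ∈ {m : EReal | ∃ u ∈ D, ∃ v ∈ E, u + v = x ∧ m = max (f u) (g v)},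
      ∀ m₂ ∈ {m : EReal | ∃ u ∈ D, ∃ v ∈ E, u + v = y ∧ m = max (f u) (g v)},
      h (T x + (y - T y)) ≤ max m₁ m₂ := by
    rintro m₁ ⟨u₁, hu₁, v₁, hv₁, rfl, rfl⟩ m₂ ⟨u₂, hu₂, v₂, hv₂, rfl, rfl⟩
    rw [hdef]
    refine sInf_le_of_le (b := max (f (T u₁ + (u₂ - T u₂))) (g (T v₁ + (v₂ - T v₂)))) ?_ ?_
    · refine ⟨T u₁ + (u₂ - T u₂), hD T hT u₁ hu₁ u₂ hu₂,
        T v₁ + (v₂ - T v₂), hE T hT v₁ hv₁ v₂ hv₂, ?_, rfl⟩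
      simp only [map_add]
      abel
    · have h1 := hf T hT u₁ hu₁ u₂ hu₂
      have h2 := hg T hT v₁ hv₁ v₂ hv₂
      refine max_le (h1.trans ?_) (h2.trans ?_)
      · exact max_le (le_max_of_le_left (le_max_left _ _))
          (le_max_of_le_right (le_max_left _ _))
      · exact max_le (le_max_of_le_left (le_max_right _ _))
          (le_max_of_le_right (le_max_right _ _))
  by_contra hc
  push_neg at hc
  have h1 : h x < h (T x + (y - T y)) := lt_of_le_of_lt (le_max_left _ _) hc
  have h2 : h y < h (T x + (y - T y)) := lt_of_le_of_lt (le_max_right _ _) hc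
  rw [hdef x] at h1
  rw [hdef y] at h2
  obtain ⟨m₁, hm₁, hlt₁⟩ := sInf_lt_iff.mp h1
  obtain ⟨m₂, hm₂, hlt₂⟩ := sInf_lt_iff.mp h2
  exact absurd (key m₁ hm₁ m₂ hm₂) (not_le.mpr (max_lt hlt₁ hlt₂))
end

section
/- If A is an endomorphism of X commuting with every member of 𝒯 and f : D → [-∞,+∞) is 𝒯-quasiconvex on a 𝒯-convex set D, then f ∘ A is 𝒯-quasiconvex on A⁻¹(D), and the function f ∘ A⁻¹ : A(D) → [-∞,+∞) defined by (f ∘ A⁻¹)(x) := inf { f(u) : u ∈ D, A(u) = x } is 𝒯-quasiconvex on A(D). -/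
/-- If `A` commutes with every member of `𝒯` and `f` is `𝒯`-quasiconvex
on the `𝒯`-convex set `D`, then `f ∘ A` is `𝒯`-quasiconvex on `A⁻¹(D)` and
`f ∘ A⁻¹` (defined via an infimum) is `𝒯`-quasiconvex on `A(D)`. -/
theorem stmt5 {X : Type*} [AddCommGroup X] (𝒯 : Set (X →+ X)) (D : Set X)
    (hD : ∀ T ∈ 𝒯, ∀ x ∈ D, ∀ y ∈ D, T x + (y - T y) ∈ D)
    (f : X → EReal) (hftop : ∀ x ∈ D, f x ≠ ⊤)
    (hf : ∀ T ∈ 𝒯, ∀ x ∈ D, ∀ y ∈ D, f (T x + (y - T y)) ≤ max (f x) (f y))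
    (A : X →+ X) (hA : ∀ T ∈ 𝒯, ∀ x : X, A (T x) = T (A x))
    (fAinv : X → EReal)
    (hfAinv : ∀ x, fAinv x = sInf {m : EReal | ∃ u ∈ D, A u = x ∧ m = f u}) :
    (∀ T ∈ 𝒯, ∀ x ∈ A ⁻¹' D, ∀ y ∈ A ⁻¹' D,
      f (A (T x + (y - T y))) ≤ max (f (A x)) (f (A y))) ∧
    (∀ T ∈ 𝒯, ∀ x ∈ A '' D, ∀ y ∈ A '' D,
      fAinv (T x + (y - T y)) ≤ max (fAinv x) (fAinv y)) := by
  have key : ∀ T ∈ 𝒯, ∀ x : X, ∀ y : X,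
      A (T x + (y - T y)) = T (A x) + (A y - T (A y)) := by
    intro T hT x y
    rw [map_add, map_sub, hA T hT, hA T hT]
  constructor
  · intro T hT x hx y hy
    rw [key T hT]
    exact hf T hT _ hx _ hy
  · intro T hT x hx y hy
    obtain ⟨u, hu, rfl⟩ := hx
    obtain ⟨v, hv, rfl⟩ := hy
    by_contra h
    push_neg at h
    obtain ⟨c, hc1, hc2⟩ := exists_between h
    have h1 : sInf {m : EReal | ∃ u' ∈ D, A u' = A u ∧ m = f u'} < c := by
      rw [← hfAinv]; exact lt_of_le_of_lt (le_max_left _ _) hc1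
    have h2 : sInf {m : EReal | ∃ u' ∈ D, A u' = A v ∧ m = f u'} < c := by
      rw [← hfAinv]; exact lt_of_le_of_lt (le_max_right _ _) hc1
    obtain ⟨a, ⟨u', hu', hAu', rfl⟩, ha⟩ := sInf_lt_iff.mp h1
    obtain ⟨b, ⟨v', hv', hAv', rfl⟩, hb⟩ := sInf_lt_iff.mp h2
    have hmem : f (T u' + (v' - T v')) ∈
        {m : EReal | ∃ w ∈ D, A w = T (A u) + (A v - T (A v)) ∧ m = f w} := by
      refine ⟨T u' + (v' - T v'), hD T hT _ hu' _ hv', ?_, rfl⟩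
      rw [key T hT, hAu', hAv']
    have := sInf_le hmem
    rw [← hfAinv] at this
    have hlt : fAinv (T (A u) + (A v - T (A v))) < c :=
      lt_of_le_of_lt (this.trans (hf T hT _ hu' _ hv')) (max_lt ha hb)
    exact absurd hc2 (not_lt.mpr hlt.le)
end

section
/- Let D ⊆ X and f : D → [-∞,+∞). The set 𝒯_f of endomorphisms T of X for which f is T-quasiconvex is closed under the operation (T, S) ↦ T∘T₁ + (I−T)∘T₂ in the sense that if T, T₁, T₂ ∈ 𝒯_f then T∘T₁ + (I−T)∘T₂ ∈ 𝒯_f. In particular, 𝒯_f is closed under composition and under T ↦ I−T. -/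
/-- `f` is `S`-quasiconvex on `D`: `D` is `S`-convex and the quasiconvexity
inequality holds. -/
def IsQuasiconvexEndo {X : Type*} [AddCommGroup X] (D : Set X) (f : X → EReal)
    (S : X →+ X) : Prop :=
  (∀ x ∈ D, ∀ y ∈ D, S x + (y - S y) ∈ D) ∧
  (∀ x ∈ D, ∀ y ∈ D, f (S x + (y - S y)) ≤ max (f x) (f y))

/-- `𝒯_f` is closed under `(T, T₁, T₂) ↦ T∘T₁ + (I−T)∘T₂`; in
particular under composition and under `T ↦ I − T`. -/
theorem stmt6 {X : Type*} [AddCommGroup X] (D : Set X) (f : X → EReal)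
    (T T₁ T₂ : X →+ X)
    (hT : IsQuasiconvexEndo D f T) (hT₁ : IsQuasiconvexEndo D f T₁)
    (hT₂ : IsQuasiconvexEndo D f T₂) :
    IsQuasiconvexEndo D f (T.comp T₁ + (AddMonoidHom.id X - T).comp T₂) ∧
    IsQuasiconvexEndo D f (T.comp T₁) ∧
    IsQuasiconvexEndo D f (AddMonoidHom.id X - T) := by
  obtain ⟨hTc, hTq⟩ := hT
  obtain ⟨hT₁c, hT₁q⟩ := hT₁
  obtain ⟨hT₂c, hT₂q⟩ := hT₂
  refine ⟨⟨?_, ?_⟩, ⟨?_, ?_⟩, ⟨?_, ?_⟩⟩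
  · intro x hx y hy
    have key : (T.comp T₁ + (AddMonoidHom.id X - T).comp T₂) x +
        (y - (T.comp T₁ + (AddMonoidHom.id X - T).comp T₂) y) =
        T (T₁ x + (y - T₁ y)) + ((T₂ x + (y - T₂ y)) - T (T₂ x + (y - T₂ y))) := by
      simp only [AddMonoidHom.add_apply, AddMonoidHom.comp_apply,
        AddMonoidHom.sub_apply, AddMonoidHom.id_apply, map_add, map_sub]
      abel
    rw [key]
    exact hTc _ (hT₁c x hx y hy) _ (hT₂c x hx y hy)
  · intro x hx y hy
    have key : (T.comp T₁ + (AddMonoidHom.id X - T).comp T₂) x +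
        (y - (T.comp T₁ + (AddMonoidHom.id X - T).comp T₂) y) =
        T (T₁ x + (y - T₁ y)) + ((T₂ x + (y - T₂ y)) - T (T₂ x + (y - T₂ y))) := by
      simp only [AddMonoidHom.add_apply, AddMonoidHom.comp_apply,
        AddMonoidHom.sub_apply, AddMonoidHom.id_apply, map_add, map_sub]
      abel
    rw [key]
    calc f _ ≤ max (f (T₁ x + (y - T₁ y))) (f (T₂ x + (y - T₂ y))) :=
          hTq _ (hT₁c x hx y hy) _ (hT₂c x hx y hy)
      _ ≤ max (max (f x) (f y)) (max (f x) (f y)) :=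
          max_le_max (hT₁q x hx y hy) (hT₂q x hx y hy)
      _ = max (f x) (f y) := max_self _
  · intro x hx y hy
    have key : (T.comp T₁) x + (y - (T.comp T₁) y) =
        T (T₁ x + (y - T₁ y)) + (y - T y) := by
      simp only [AddMonoidHom.comp_apply, map_add, map_sub]
      abel
    rw [key]
    exact hTc _ (hT₁c x hx y hy) _ hy
  · intro x hx y hy
    have key : (T.comp T₁) x + (y - (T.comp T₁) y) =
        T (T₁ x + (y - T₁ y)) + (y - T y) := by
      simp only [AddMonoidHom.comp_apply, map_add, map_sub]
      abel
    rw [key]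
    calc f _ ≤ max (f (T₁ x + (y - T₁ y))) (f y) := hTq _ (hT₁c x hx y hy) _ hy
      _ ≤ max (max (f x) (f y)) (f y) := max_le_max (hT₁q x hx y hy) le_rfl
      _ = max (f x) (f y) := by rw [max_assoc, max_self]
  · intro x hx y hy
    have key : (AddMonoidHom.id X - T) x + (y - (AddMonoidHom.id X - T) y) =
        T y + (x - T x) := by
      simp only [AddMonoidHom.sub_apply, AddMonoidHom.id_apply]
      abel
    rw [key]
    exact hTc y hy x hx
  · intro x hx y hy
    have key : (AddMonoidHom.id X - T) x + (y - (AddMonoidHom.id X - T) y) =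
        T y + (x - T x) := by
      simp only [AddMonoidHom.sub_apply, AddMonoidHom.id_apply]
      abel
    rw [key]
    exact (hTq y hy x hx).trans_eq (max_comm _ _)
end

section
/- Let (X,+,d) be a uniquely 2-divisible metric abelian group (d a translation-invariant metric), T a d-bounded endomorphism with spectral radius ρ_d(2·T − I) < 1, and D ⊆ X a closed T-convex set. Then every lower semicontinuous T-quasiconvex function f : D → [-∞,+∞) is midpoint quasiconvex, i.e., f((x+y)/2) ≤ max(f(x), f(y)) for all x, y ∈ D. -/
/-- The `d`-norm of a self-map of a metric abelian group: the infimum of those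
nonnegative constants `c` with `dist (g x) 0 ≤ c * dist x 0` for all `x`. -/
noncomputable def dnormF {X : Type*} [AddCommGroup X] [MetricSpace X] (g : X → X) : ℝ :=
  sInf {c : ℝ | 0 ≤ c ∧ ∀ x : X, dist (g x) 0 ≤ c * dist x 0}

private lemma dnormF_spec {X : Type*} [AddCommGroup X] [MetricSpace X] (g : X → X)
    (hne : ∃ c : ℝ, 0 ≤ c ∧ ∀ x : X, dist (g x) 0 ≤ c * dist x 0) :
    0 ≤ dnormF g ∧ ∀ x : X, dist (g x) 0 ≤ dnormF g * dist x 0 := by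
  have hne' : {c : ℝ | 0 ≤ c ∧ ∀ x : X, dist (g x) 0 ≤ c * dist x 0}.Nonempty := hne
  have h0 : 0 ≤ dnormF g := le_csInf hne' fun c hc => hc.1
  refine ⟨h0, fun x => ?_⟩
  rcases eq_or_lt_of_le (dist_nonneg (x := x) (y := 0)) with h | h
  · obtain ⟨c, hc0, hc⟩ := hne
    have := hc x
    rw [← h] at this ⊢
    simpa using this
  · have hle : dist (g x) 0 / dist x 0 ≤ dnormF g := by
      apply le_csInf hne'
      intro c hc
      exact (div_le_iff₀ h).2 (hc.2 x)
    calc dist (g x) 0 = dist (g x) 0 / dist x 0 * dist x 0 := by field_simp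
      _ ≤ dnormF g * dist x 0 := mul_le_mul_of_nonneg_right hle h.le

/-- In a uniquely 2-divisible metric abelian group, if `T` is a
`d`-bounded endomorphism with `ρ_d(2T − I) < 1` and `D` is a closed `T`-convex
set, then every lower semicontinuous `T`-quasiconvex `f : D → [-∞,∞)` is
midpoint quasiconvex. -/
theorem stmt7 {X : Type*} [AddCommGroup X] [MetricSpace X]
    (hinv : ∀ x y z : X, dist (x + z) (y + z) = dist x y)
    (hdiv2 : Function.Bijective (fun x : X => x + x))
    (T : X →+ X)
    (hTb : ∃ c : ℝ, 0 ≤ c ∧ ∀ x : X, dist (T x) 0 ≤ c * dist x 0)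
    (hrho : Filter.limsup
      (fun m : ℕ => (dnormF ((fun x : X => T x + T x - x)^[m])) ^ ((1 : ℝ) / (m : ℝ)))
      Filter.atTop < 1)
    (D : Set X) (hDcl : IsClosed D)
    (hD : ∀ x ∈ D, ∀ y ∈ D, T x + (y - T y) ∈ D)
    (f : X → EReal) (hftop : ∀ x ∈ D, f x ≠ ⊤)
    (hlsc : LowerSemicontinuousOn f D)
    (hqc : ∀ x ∈ D, ∀ y ∈ D, f (T x + (y - T y)) ≤ max (f x) (f y)) :
    ∀ x ∈ D, ∀ y ∈ D, ∀ m : X, m + m = x + y → f m ≤ max (f x) (f y) := by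
  intro x hx y hy m hm
  obtain ⟨c, hc0, hTc⟩ := hTb
  set S : X → X := fun z : X => T z + T z - z with hSdef
  -- basic metric facts
  have hneg : ∀ z : X, dist (-z) 0 = dist z 0 := by
    intro z
    have h := hinv (-z) 0 z
    simp only [neg_add_cancel, zero_add] at h
    rw [← h, dist_comm]
  -- S is bounded
  have hSb : ∀ z : X, dist (S z) 0 ≤ (2 * c + 1) * dist z 0 := by
    intro z
    have h1 : dist (S z) (T z - z) = dist (T z) 0 := by
      have h := hinv (T z) 0 (T z - z)
      rw [← h]; congr 1 <;> simp [hSdef] <;> abel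
    have h2 : dist (T z - z) (-z) = dist (T z) 0 := by
      have h := hinv (T z) 0 (-z)
      rw [← h]; congr 1 <;> abel
    calc dist (S z) 0 ≤ dist (S z) (T z - z) + dist (T z - z) (-z) + dist (-z) 0 :=
          dist_triangle4 _ _ _ _
      _ = dist (T z) 0 + dist (T z) 0 + dist z 0 := by rw [h1, h2, hneg]
      _ ≤ c * dist z 0 + c * dist z 0 + dist z 0 := by
          have := hTc z; linarith
      _ = (2 * c + 1) * dist z 0 := by ring
  -- iterates of S are bounded, with explicit constant
  have hSnb : ∀ n : ℕ, ∀ z : X, dist (S^[n] z) 0 ≤ (2 * c + 1) ^ n * dist z 0 := by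
    intro n
    induction n with
    | zero => intro z; simp
    | succ n ih =>
      intro z
      rw [Function.iterate_succ_apply']
      calc dist (S (S^[n] z)) 0 ≤ (2 * c + 1) * dist (S^[n] z) 0 := hSb _
        _ ≤ (2 * c + 1) * ((2 * c + 1) ^ n * dist z 0) := by
            apply mul_le_mul_of_nonneg_left (ih z); linarith
        _ = (2 * c + 1) ^ (n + 1) * dist z 0 := by ring
  have hd : ∀ n : ℕ, 0 ≤ dnormF (S^[n]) ∧
      ∀ z : X, dist (S^[n] z) 0 ≤ dnormF (S^[n]) * dist z 0 :=
    fun n => dnormF_spec _ ⟨(2 * c + 1) ^ n, by positivity, hSnb n⟩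
  have hd_le : ∀ n : ℕ, dnormF (S^[n]) ≤ (2 * c + 1) ^ n := fun n =>
    csInf_le ⟨0, fun b hb => hb.1⟩ ⟨by positivity, hSnb n⟩
  -- eventual geometric bound
  obtain ⟨r, hr1, hr2⟩ := exists_between hrho
  set r' : ℝ := max r 0 with hr'def
  have hr'1 : r' < 1 := max_lt hr2 one_pos
  have hr'0 : 0 ≤ r' := le_max_right _ _
  have hbdd : Filter.IsBoundedUnder (· ≤ ·) Filter.atTop
      (fun n : ℕ => (dnormF (S^[n])) ^ ((1 : ℝ) / (n : ℝ))) := by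
    apply Filter.isBoundedUnder_of
    refine ⟨max (2 * c + 1) 1, fun n => ?_⟩
    rcases Nat.eq_zero_or_pos n with h0 | h1
    · subst h0; simp
    · have hne : (n : ℝ) ≠ 0 := by exact_mod_cast h1.ne'
      have hbase : (0 : ℝ) ≤ 2 * c + 1 := by linarith
      calc (dnormF (S^[n])) ^ ((1 : ℝ) / (n : ℝ))
          ≤ ((2 * c + 1) ^ n) ^ ((1 : ℝ) / (n : ℝ)) :=
            Real.rpow_le_rpow (hd n).1 (hd_le n) (by positivity)
        _ = 2 * c + 1 := by
            rw [← Real.rpow_natCast (2 * c + 1) n, ← Real.rpow_mul hbase,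
              mul_one_div_cancel hne, Real.rpow_one]
        _ ≤ max (2 * c + 1) 1 := le_max_left _ _
  have hev : ∀ᶠ n : ℕ in Filter.atTop,
      (dnormF (S^[n])) ^ ((1 : ℝ) / (n : ℝ)) < r :=
    Filter.eventually_lt_of_limsup_lt hr1 hbdd
  have hev2 : ∀ᶠ n : ℕ in Filter.atTop, dnormF (S^[n]) ≤ r' ^ n := by
    filter_upwards [hev, Filter.eventually_ge_atTop 1] with n hn hn1
    have hd0 := (hd n).1
    have hne : (n : ℝ) ≠ 0 := by
      exact_mod_cast Nat.one_le_iff_ne_zero.mp hn1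
    have heq : ((dnormF (S^[n])) ^ ((1 : ℝ) / (n : ℝ))) ^ (n : ℝ) = dnormF (S^[n]) := by
      rw [← Real.rpow_mul hd0, one_div_mul_cancel hne, Real.rpow_one]
    calc dnormF (S^[n]) = ((dnormF (S^[n])) ^ ((1 : ℝ) / (n : ℝ))) ^ (n : ℝ) := heq.symm
      _ ≤ r' ^ (n : ℝ) :=
          Real.rpow_le_rpow (Real.rpow_nonneg hd0 _)
            (hn.le.trans (le_max_left _ _)) (Nat.cast_nonneg n)
      _ = r' ^ n := Real.rpow_natCast _ _
  -- the iterated midpoint construction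
  set h : X := x - m with hhdef
  set u : ℕ → X := fun n => S^[n] h with hudef
  set α : EReal := max (f x) (f y) with hαdef
  set A : Set X := {z | z ∈ D ∧ f z ≤ α} with hAdef
  -- A is closed
  have hA : IsClosed A := by
    refine isClosed_of_closure_subset fun z hz => ?_
    have hzD : z ∈ D := hDcl.closure_subset (closure_mono (fun w hw => hw.1) hz)
    refine ⟨hzD, ?_⟩
    by_contra hcon
    push_neg at hcon
    have h1 : ∀ᶠ w in nhdsWithin z D, α < f w := hlsc z hzD α hcon
    have h2 : ∀ᶠ w in nhdsWithin z A, α < f w :=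
      h1.filter_mono (nhdsWithin_mono z fun w hw => hw.1)
    have h3 : ∀ᶠ w in nhdsWithin z A, w ∈ A := self_mem_nhdsWithin
    have hne : (nhdsWithin z A).NeBot := mem_closure_iff_nhdsWithin_neBot.1 hz
    obtain ⟨w, hw1, hw2⟩ := (h2.and h3).exists
    exact absurd hw2.2 (not_le.2 hw1)
  -- A is T-convex
  have hAconv : ∀ a ∈ A, ∀ b ∈ A, T a + (b - T b) ∈ A := by
    intro a ha b hb
    exact ⟨hD a ha.1 b hb.1,
      le_trans (hqc a ha.1 b hb.1) (max_le (le_trans (le_max_left _ _) le_rfl |>.trans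
        (max_le_max ha.2 hb.2) |>.trans (by simp)) (by
          exact le_trans hb.2 le_rfl))⟩
  -- the sequence stays in A
  have hkey : ∀ n : ℕ, (m + u n) ∈ A ∧ (m - u n) ∈ A := by
    intro n
    induction n with
    | zero =>
      constructor
      · have : m + u 0 = x := by simp [hudef, hhdef]
        rw [this]; exact ⟨hx, le_max_left _ _⟩
      · have : m - u 0 = y := by
          simp only [hudef, Function.iterate_zero, id_eq, hhdef]
          have : y = m + m - x := by rw [hm]; abel
          rw [this]; abel
        rw [this]; exact ⟨hy, le_max_right _ _⟩
    | succ n ih =>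
      have hu1 : u (n + 1) = S (u n) := by
        simp only [hudef]; rw [Function.iterate_succ_apply']
      constructor
      · have heq : m + u (n + 1) = T (m + u n) + ((m - u n) - T (m - u n)) := by
          rw [hu1, map_add, map_sub]
          simp only [hSdef]
          abel
        rw [heq]; exact hAconv _ ih.1 _ ih.2
      · have heq : m - u (n + 1) = T (m - u n) + ((m + u n) - T (m + u n)) := by
          rw [hu1, map_add, map_sub]
          simp only [hSdef]
          abel
        rw [heq]; exact hAconv _ ih.2 _ ih.1
  -- convergence to m
  have hdist : ∀ n : ℕ, dist (m + u n) m = dist (u n) 0 := by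
    intro n
    have h := hinv (u n) 0 m
    rw [zero_add] at h
    rw [← h, add_comm]
  have htend0 : Filter.Tendsto (fun n => dist (u n) 0) Filter.atTop (nhds 0) := by
    have hb : Filter.Tendsto (fun n : ℕ => r' ^ n * dist h 0) Filter.atTop (nhds 0) := by
      have hp : Filter.Tendsto (fun n : ℕ => r' ^ n) Filter.atTop (nhds 0) :=
        tendsto_pow_atTop_nhds_zero_of_lt_one hr'0 hr'1
      simpa using hp.mul_const (dist h 0)
    apply squeeze_zero' (Filter.Eventually.of_forall fun n => dist_nonneg) _ hb
    filter_upwards [hev2] with n hn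
    exact le_trans ((hd n).2 h) (mul_le_mul_of_nonneg_right hn dist_nonneg)
  have htend : Filter.Tendsto (fun n => m + u n) Filter.atTop (nhds m) := by
    rw [tendsto_iff_dist_tendsto_zero]
    simpa only [hdist] using htend0
  have hmA : m ∈ A := hA.mem_of_tendsto htend
    (Filter.Eventually.of_forall fun n => (hkey n).1)
  exact hmA.2
end

section
/- If T and S are endomorphisms of X such that f : D → [-∞,+∞) is both T-Wright convex and S-Wright convex, then f is (T∘S + (I−T)∘(I−S))-Wright convex. Moreover, if f is T-Wright convex then f is (I−T)-Wright convex. -/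
/-- `f` is `T`-Wright convex on `D`: `D` is `T`-convex and the Wright convexity
inequality holds. -/
def IsWrightEndo {X : Type*} [AddCommGroup X] (D : Set X) (f : X → EReal)
    (T : X →+ X) : Prop :=
  (∀ x ∈ D, ∀ y ∈ D, T x + (y - T y) ∈ D) ∧
  (∀ x ∈ D, ∀ y ∈ D, f (T x + (y - T y)) + f ((x - T x) + T y) ≤ f x + f y)

/-- If `f` is `T`- and `S`-Wright convex, then it is
`(T∘S + (I−T)∘(I−S))`-Wright convex; moreover `T`-Wright convexity implies
`(I−T)`-Wright convexity. -/
theorem stmt10 {X : Type*} [AddCommGroup X] (D : Set X) (f : X → EReal)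
    (T S : X →+ X) (hT : IsWrightEndo D f T) (hS : IsWrightEndo D f S) :
    IsWrightEndo D f (T.comp S + (AddMonoidHom.id X - T).comp (AddMonoidHom.id X - S)) ∧
    IsWrightEndo D f (AddMonoidHom.id X - T) := by
  obtain ⟨hTc, hTi⟩ := hT
  obtain ⟨hSc, hSi⟩ := hS
  set R := T.comp S + (AddMonoidHom.id X - T).comp (AddMonoidHom.id X - S) with hR
  have hRapp : ∀ x : X, R x = T (S x) + ((x - S x) - T (x - S x)) := by
    intro x
    simp [hR, AddMonoidHom.sub_apply, AddMonoidHom.comp_apply, sub_eq_add_neg]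
  refine ⟨⟨?_, ?_⟩, ?_, ?_⟩
  · intro x hx y hy
    have hu := hSc x hx y hy
    have hv' := hSc y hy x hx
    have hv : (x - S x) + S y ∈ D := by rwa [add_comm] at hv'
    have h := hTc _ hu _ hv
    have e : T (S x + (y - S y)) + (((x - S x) + S y) - T ((x - S x) + S y))
        = R x + (y - R y) := by
      simp only [hRapp, map_add, map_sub]
      abel
    rwa [e] at h
  · intro x hx y hy
    have hu := hSc x hx y hy
    have hv' := hSc y hy x hx
    have hv : (x - S x) + S y ∈ D := by rwa [add_comm] at hv'
    have h1 := hTi _ hu _ hv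
    have h2 := hSi x hx y hy
    have e1 : T (S x + (y - S y)) + (((x - S x) + S y) - T ((x - S x) + S y))
        = R x + (y - R y) := by
      simp only [hRapp, map_add, map_sub]
      abel
    have e2 : ((S x + (y - S y)) - T (S x + (y - S y))) + T ((x - S x) + S y)
        = (x - R x) + R y := by
      simp only [hRapp, map_add, map_sub]
      abel
    rw [e1, e2] at h1
    exact h1.trans h2
  · intro x hx y hy
    have h := hTc y hy x hx
    have e : T y + (x - T x) = (AddMonoidHom.id X - T) x
        + (y - (AddMonoidHom.id X - T) y) := by
      simp only [AddMonoidHom.sub_apply, AddMonoidHom.id_apply]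
      abel
    rwa [e] at h
  · intro x hx y hy
    have h := hTi x hx y hy
    have e1 : (x - T x) + T y = (AddMonoidHom.id X - T) x
        + (y - (AddMonoidHom.id X - T) y) := by
      simp only [AddMonoidHom.sub_apply, AddMonoidHom.id_apply]
      abel
    have e2 : T x + (y - T y) = (x - (AddMonoidHom.id X - T) x)
        + (AddMonoidHom.id X - T) y := by
      simp only [AddMonoidHom.sub_apply, AddMonoidHom.id_apply]
      abel
    rw [← e1, ← e2, add_comm]
    exact h
end

section
/- Let (X,+) be an abelian group, T₀ an endomorphism with T₀(X) = (I−T₀)(X), and suppose a : X → ℝ has the form a(x) = B(x,x) + A(x) + c with A : X → ℝ additive, B : X × X → ℝ symmetric biadditive, and c ∈ ℝ. Then for an endomorphism T, a satisfies a(T(x)+(I−T)(y)) + a((I−T)(x)+T(y)) = a(x) + a(y) for all x, y ∈ X if and only if B(T(u), (I−T)(u)) = 0 for all u ∈ X. -/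
/-- For `a(x) = B(x,x) + A(x) + c` with `A` additive and `B`
symmetric biadditive, and `T₀` an endomorphism with `T₀(X) = (I−T₀)(X)`,
`a` is `T`-Wright affine iff `B(T(u), (I−T)(u)) = 0` for all `u`. -/
theorem stmt12 {X : Type*} [AddCommGroup X]
    (T₀ : X →+ X) (hT₀ : Set.range ⇑T₀ = Set.range ⇑(AddMonoidHom.id X - T₀))
    (A : X →+ ℝ) (B : X → X → ℝ)
    (hBsymm : ∀ x y, B x y = B y x)
    (hBadd : ∀ x y z, B (x + y) z = B x z + B y z)
    (c : ℝ) (a : X → ℝ) (ha : ∀ x, a x = B x x + A x + c)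
    (T : X →+ X) :
    (∀ x y : X, a (T x + (y - T y)) + a ((x - T x) + T y) = a x + a y) ↔
    (∀ u : X, B (T u) (u - T u) = 0) := by
  have hBsub : ∀ x y z, B (x - y) z = B x z - B y z := by
    intro x y z
    have h := hBadd (x - y) y z
    rw [sub_add_cancel] at h
    linarith
  have hBaddR : ∀ x y z, B x (y + z) = B x y + B x z := by
    intro x y z
    rw [hBsymm, hBadd, hBsymm y x, hBsymm z x]
  have hBsubR : ∀ x y z, B x (y - z) = B x y - B x z := by
    intro x y z
    rw [hBsymm, hBsub, hBsymm y x, hBsymm z x]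
  have key : ∀ x y : X, a (T x + (y - T y)) + a ((x - T x) + T y) =
      a x + a y - 2 * B (T (x - y)) ((x - y) - T (x - y)) := by
    intro x y
    simp only [ha, map_add, map_sub, hBadd, hBaddR, hBsub, hBsubR]
    linarith [hBsymm x y, hBsymm x (T x), hBsymm x (T y), hBsymm y (T x),
      hBsymm y (T y), hBsymm (T x) (T y)]
  constructor
  · intro h u
    have h1 := h u 0
    have h2 := key u 0
    rw [h1] at h2
    simp only [sub_zero] at h2
    linarith
  · intro h x y
    rw [key x y, h (x - y)]
    ring
end

section
/- Let (T,t) be a pair consisting of an endomorphism T of X and t ∈ (0,1), D ⊆ X a T-convex set, and f : D → [-∞,+∞) a (T,t)-convex function (f(T(x)+(I−T)(y)) ≤ t·f(x) + (1−t)·f(y)). If f(p) > −∞ for some point p ∈ D that is T-internal with respect to D, then f(x) ∈ ℝ for all x ∈ D. -/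
/-- If `f : D → [-∞,∞)` is `(T,t)`-convex with `t ∈ (0,1)` and
`f(p) > -∞` at some `T`-internal point `p` of `D`, then `f` is real-valued on
all of `D`. -/
theorem stmt13 {X : Type*} [AddCommGroup X] (D : Set X) (T : X →+ X)
    (hD : ∀ x ∈ D, ∀ y ∈ D, T x + (y - T y) ∈ D)
    (t : ℝ) (ht0 : 0 < t) (ht1 : t < 1)
    (f : X → EReal) (hftop : ∀ x ∈ D, f x ≠ ⊤)
    (hconv : ∀ x ∈ D, ∀ y ∈ D,
      f (T x + (y - T y)) ≤ (t : EReal) * f x + ((1 - t : ℝ) : EReal) * f y)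
    (p : X) (hp : p ∈ D) (hpfin : f p ≠ ⊥)
    (hint : ∀ E : Set X, E ⊆ D → p ∈ E →
      (∀ x ∈ D, ∀ y ∈ D, T x + (y - T y) ∈ E → x ∈ E ∧ y ∈ E) → E = D) :
    ∀ x ∈ D, ∃ r : ℝ, f x = (r : EReal) := by
  set E : Set X := {x | x ∈ D ∧ f x ≠ ⊥} with hE
  have hED : E = D := by
    apply hint E (fun x hx => hx.1) ⟨hp, hpfin⟩
    intro x hx y hy hmem
    have hne : f x ≠ ⊥ ∧ f y ≠ ⊥ := by
      by_contra h
      have hbot : (t : EReal) * f x + ((1 - t : ℝ) : EReal) * f y = ⊥ := by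
        rcases not_and_or.mp h with h | h
        · push_neg at h
          rw [h, EReal.coe_mul_bot_of_pos ht0, EReal.bot_add]
        · push_neg at h
          rw [h, EReal.coe_mul_bot_of_pos (by linarith), EReal.add_bot]
      exact hmem.2 (le_bot_iff.mp (hbot ▸ hconv x hx y hy))
    exact ⟨⟨hx, hne.1⟩, ⟨hy, hne.2⟩⟩
  intro x hx
  have hxE : x ∈ E := hED ▸ hx
  lift f x to ℝ using ⟨hftop x hx, hxE.2⟩ with r hr
  exact ⟨r, rfl⟩
end

section
/- Let T be an endomorphism of the abelian group X such that T(X) ⊆ (I−T)(X) or (I−T)(X) ⊆ T(X). Then every element p of X is T-internal with respect to X; in fact, for every p ∈ X, {x ∈ X : ∃ y ∈ X, T(x)+(I−T)(y) = p or T(y)+(I−T)(x) = p} = X. -/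
/-- If `T(X) ⊆ (I−T)(X)` or `(I−T)(X) ⊆ T(X)`, then every `p ∈ X`
is `T`-internal with respect to `X`; in fact the set
`{x | ∃ y, T(x)+(I−T)(y) = p or T(y)+(I−T)(x) = p}` is all of `X`. -/
theorem stmt14 {X : Type*} [AddCommGroup X] (T : X →+ X)
    (h : Set.range ⇑T ⊆ Set.range (fun x : X => x - T x) ∨
      Set.range (fun x : X => x - T x) ⊆ Set.range ⇑T) :
    ∀ p : X,
      ({x : X | ∃ y : X, T x + (y - T y) = p ∨ T y + (x - T x) = p} = Set.univ) ∧
      (∀ E : Set X, p ∈ E →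
        (∀ x y : X, T x + (y - T y) ∈ E → x ∈ E ∧ y ∈ E) → E = Set.univ) := by
  intro p
  have key : ∀ x : X, ∃ y : X, T x + (y - T y) = p ∨ T y + (x - T x) = p := by
    intro x
    rcases h with h | h
    · -- T(p - x) ∈ range (I - T): T(p-x) = w - T w
      obtain ⟨w, hw⟩ := h ⟨p - x, rfl⟩
      refine ⟨w + p, Or.inl ?_⟩
      simp only [map_sub] at hw
      simp only [map_add]
      linear_combination (norm := abel) hw
    · -- (p - x) - T (p - x) ∈ range T: = T w
      obtain ⟨w, hw⟩ := h ⟨p - x, rfl⟩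
      refine ⟨w + p, Or.inr ?_⟩
      simp only [map_sub] at hw
      simp only [map_add]
      linear_combination (norm := abel) hw
  constructor
  · ext x
    simp only [Set.mem_setOf_eq, Set.mem_univ, iff_true]
    exact key x
  · intro E hp hE
    ext x
    simp only [Set.mem_univ, iff_true]
    obtain ⟨y, hy | hy⟩ := key x
    · exact (hE x y (hy ▸ hp)).1
    · exact (hE y x (hy ▸ hp)).2
end

section
/- Let ℛ be a nonempty set of pairs (T,t) with T an endomorphism of X and t ∈ [0,1]. A function f : D → [-∞,+∞) is ℛ-convex (i.e., D is T-convex and f(T(x)+(I−T)(y)) ≤ t f(x) + (1−t) f(y) for all x,y ∈ D and (T,t) ∈ ℛ) if and only if its epigraph epi(f) = {(x,u) ∈ D × ℝ : f(x) ≤ u} is ℛ-convex as a subset of X × ℝ, where (T,t) acts on X × ℝ by (T,t)(x,u) = (T(x), t·u). -/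
private lemma ebot_of_forall_le {c : EReal} (h : ∀ r : ℝ, c ≤ r) : c = ⊥ := by
  rw [EReal.eq_bot_iff_forall_lt]
  intro y
  exact lt_of_le_of_lt (h (y - 1)) (by exact_mod_cast sub_one_lt y)

private lemma aux_le (t : ℝ) (ht0 : 0 ≤ t) (ht1 : t ≤ 1) (c x y : EReal)
    (hx : x ≠ ⊤) (hy : y ≠ ⊤)
    (h : ∀ a b : ℝ, x ≤ (a : EReal) → y ≤ (b : EReal) →
      c ≤ ((t * a + (1 - t) * b : ℝ) : EReal)) :
    c ≤ (t : EReal) * x + ((1 - t : ℝ) : EReal) * y := by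
  have ht1' : 0 ≤ 1 - t := by linarith
  induction x with
  | bot =>
    induction y with
    | bot =>
      -- both bot: c = ⊥ unless t=0 and 1-t=0 impossible; one of t,1-t > 0
      have : c = ⊥ := by
        apply ebot_of_forall_le
        intro r
        rcases lt_or_eq_of_le ht0 with htpos | ht0'
        · have := h ((r - (1 - t) * r) / t) r (bot_le) (bot_le)
          rw [mul_div_cancel₀ _ (ne_of_gt htpos)] at this
          simpa using this
        · have h1t : 0 < 1 - t := by linarith
          have := h 0 ((r - t * 0) / (1 - t)) bot_le bot_le
          rw [mul_div_cancel₀ _ (ne_of_gt h1t)] at this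
          simpa using this
      simp [this]
    | coe b0 =>
      rcases lt_or_eq_of_le ht0 with htpos | ht0'
      · have hc : c = ⊥ := by
          apply ebot_of_forall_le
          intro r
          have := h ((r - (1 - t) * b0) / t) b0 bot_le le_rfl
          rw [mul_div_cancel₀ _ (ne_of_gt htpos)] at this
          simpa using this
        simp [hc]
      · subst ht0'
        have := h 0 b0 bot_le le_rfl
        simpa [EReal.zero_mul] using this
    | top => exact absurd rfl hy
  | coe a0 =>
    induction y with
    | bot =>
      rcases lt_or_eq_of_le ht1' with h1tpos | h1t0
      · have hc : c = ⊥ := by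
          apply ebot_of_forall_le
          intro r
          have := h a0 ((r - t * a0) / (1 - t)) le_rfl bot_le
          rw [mul_div_cancel₀ _ (ne_of_gt h1tpos)] at this
          simpa using this
        simp [hc]
      · have ht1'' : t = 1 := by linarith
        have := h a0 0 le_rfl bot_le
        have h1t : (1 - t : ℝ) = 0 := by linarith
        rw [h1t]
        simpa [ht1'', h1t, EReal.zero_mul] using this
    | coe b0 =>
      have := h a0 b0 le_rfl le_rfl
      rw [EReal.coe_add, EReal.coe_mul, EReal.coe_mul] at this
      exact this
    | top => exact absurd rfl hy
  | top => exact absurd rfl hx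

private lemma aux_mul_mono (t : ℝ) (ht0 : 0 ≤ t) {x : EReal} {a : ℝ} (hxa : x ≤ (a : EReal)) :
    (t : EReal) * x ≤ ((t * a : ℝ) : EReal) := by
  rw [EReal.coe_mul]
  exact mul_le_mul_of_nonneg_left hxa (by exact_mod_cast ht0)

/-- `f : D → [-∞,∞)` is `ℛ`-convex iff its epigraph is an
`ℛ`-convex subset of `X × ℝ`, where `(T,t)` acts by `(x,u) ↦ (T(x), t·u)`. -/
theorem stmt15 {X : Type*} [AddCommGroup X]
    (ℛ : Set ((X →+ X) × ℝ)) (hRne : ℛ.Nonempty)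
    (hR01 : ∀ r ∈ ℛ, r.2 ∈ Set.Icc (0 : ℝ) 1)
    (D : Set X) (f : X → EReal) (hftop : ∀ x ∈ D, f x ≠ ⊤) :
    (∀ r ∈ ℛ, (∀ x ∈ D, ∀ y ∈ D, r.1 x + (y - r.1 y) ∈ D) ∧
      ∀ x ∈ D, ∀ y ∈ D,
        f (r.1 x + (y - r.1 y)) ≤ (r.2 : EReal) * f x + ((1 - r.2 : ℝ) : EReal) * f y) ↔
    (∀ r ∈ ℛ, ∀ p ∈ {q : X × ℝ | q.1 ∈ D ∧ f q.1 ≤ (q.2 : EReal)},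
      ∀ q ∈ {q : X × ℝ | q.1 ∈ D ∧ f q.1 ≤ (q.2 : EReal)},
      (r.1 p.1 + (q.1 - r.1 q.1), r.2 * p.2 + (1 - r.2) * q.2) ∈
        {q : X × ℝ | q.1 ∈ D ∧ f q.1 ≤ (q.2 : EReal)}) := by
  constructor
  · intro h r hr p hp q hq
    obtain ⟨ht0, ht1⟩ := hR01 r hr
    obtain ⟨hD, hf⟩ := h r hr
    refine ⟨hD _ hp.1 _ hq.1, ?_⟩
    calc f (r.1 p.1 + (q.1 - r.1 q.1))
        ≤ (r.2 : EReal) * f p.1 + ((1 - r.2 : ℝ) : EReal) * f q.1 :=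
          hf _ hp.1 _ hq.1
      _ ≤ ((r.2 * p.2 : ℝ) : EReal) + ((1 - r.2) * q.2 : ℝ) :=
          add_le_add (aux_mul_mono r.2 ht0 hp.2) (aux_mul_mono (1 - r.2) (by linarith) hq.2)
      _ = ((r.2 * p.2 + (1 - r.2) * q.2 : ℝ) : EReal) := by rw [EReal.coe_add]
  · intro h r hr
    obtain ⟨ht0, ht1⟩ := hR01 r hr
    have key : ∀ x ∈ D, ∀ y ∈ D, ∀ a b : ℝ, f x ≤ (a : EReal) → f y ≤ (b : EReal) →
        r.1 x + (y - r.1 y) ∈ D ∧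
        f (r.1 x + (y - r.1 y)) ≤ ((r.2 * a + (1 - r.2) * b : ℝ) : EReal) := by
      intro x hx y hy a b ha hb
      exact h r hr (x, a) ⟨hx, ha⟩ (y, b) ⟨hy, hb⟩
    have hreal : ∀ x ∈ D, ∃ a : ℝ, f x ≤ (a : EReal) := fun x hx =>
      ⟨(f x).toReal, EReal.le_coe_toReal (hftop x hx)⟩
    constructor
    · intro x hx y hy
      obtain ⟨a, ha⟩ := hreal x hx
      obtain ⟨b, hb⟩ := hreal y hy
      exact (key x hx y hy a b ha hb).1
    · intro x hx y hy
      exact aux_le r.2 ht0 ht1 _ _ _ (hftop x hx) (hftop y hy)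
        (fun a b ha hb => (key x hx y hy a b ha hb).2)
end

section
/- If f : D → [-∞,+∞) and g : E → [-∞,+∞) are ℛ-convex functions (D, E ⊆ X), then the infimal convolution (f * g)(x) := inf{ f(u) + g(v) : u ∈ D, v ∈ E, u+v = x } is ℛ-convex on D + E. -/
open scoped Pointwise

lemma aux_mul_ne_top (t : ℝ) (ht : 0 ≤ t) {p : EReal} (hp : p ≠ ⊤) : (t : EReal) * p ≠ ⊤ := by
  induction p with
  | bot =>
    rcases ht.eq_or_lt with rfl | ht
    · simp
    · rw [EReal.mul_bot_of_pos (by exact_mod_cast ht)]; simp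
  | coe p => rw [← EReal.coe_mul]; exact EReal.coe_ne_top _
  | top => exact absurd rfl hp

lemma aux_mul_add (t : ℝ) (ht : 0 ≤ t) {p q : EReal} (hp : p ≠ ⊤) (hq : q ≠ ⊤) :
    (t : EReal) * (p + q) = (t : EReal) * p + (t : EReal) * q := by
  rcases ht.eq_or_lt with rfl | ht
  · simp
  have ht' : (0 : EReal) < (t : EReal) := by exact_mod_cast ht
  induction p with
  | bot =>
    rw [EReal.bot_add, EReal.mul_bot_of_pos ht', EReal.bot_add]
  | coe p =>
    induction q with
    | bot => rw [EReal.add_bot, EReal.mul_bot_of_pos ht', EReal.add_bot]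
    | coe q => norm_cast; ring
    | top => exact absurd rfl hq
  | top => exact absurd rfl hp

lemma aux_exists_lt (t : ℝ) (ht : 0 < t) (S : Set EReal) {a : EReal}
    (h : (t : EReal) * sInf S < a) : ∃ m ∈ S, (t : EReal) * m < a := by
  by_contra hc
  push_neg at hc
  have ht' : (0 : EReal) < (t : EReal) := by exact_mod_cast ht
  have htne : (t : EReal) ≠ ⊤ := EReal.coe_ne_top _
  have : a / (t : EReal) ≤ sInf S := by
    refine le_sInf fun m hm => ?_
    rw [EReal.div_le_iff_le_mul ht' htne]
    exact hc m hm
  rw [EReal.div_le_iff_le_mul ht' htne] at this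
  exact absurd h (not_lt.mpr this)

/-- The infimal convolution of two `ℛ`-convex functions is
`ℛ`-convex on `D + E`. -/
theorem stmt16 {X : Type*} [AddCommGroup X]
    (ℛ : Set ((X →+ X) × ℝ)) (hRne : ℛ.Nonempty)
    (hR01 : ∀ r ∈ ℛ, r.2 ∈ Set.Icc (0 : ℝ) 1)
    (D E : Set X) (f g : X → EReal)
    (hftop : ∀ x ∈ D, f x ≠ ⊤) (hgtop : ∀ x ∈ E, g x ≠ ⊤)
    (hD : ∀ r ∈ ℛ, ∀ x ∈ D, ∀ y ∈ D, r.1 x + (y - r.1 y) ∈ D)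
    (hE : ∀ r ∈ ℛ, ∀ x ∈ E, ∀ y ∈ E, r.1 x + (y - r.1 y) ∈ E)
    (hf : ∀ r ∈ ℛ, ∀ x ∈ D, ∀ y ∈ D,
      f (r.1 x + (y - r.1 y)) ≤ (r.2 : EReal) * f x + ((1 - r.2 : ℝ) : EReal) * f y)
    (hg : ∀ r ∈ ℛ, ∀ x ∈ E, ∀ y ∈ E,
      g (r.1 x + (y - r.1 y)) ≤ (r.2 : EReal) * g x + ((1 - r.2 : ℝ) : EReal) * g y)
    (h : X → EReal)
    (hdef : ∀ x, h x = sInf {m : EReal | ∃ u ∈ D, ∃ v ∈ E, u + v = x ∧ m = f u + g v})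
    (hhtop : ∀ x ∈ D + E, h x ≠ ⊤) :
    ∀ r ∈ ℛ, ∀ x ∈ D + E, ∀ y ∈ D + E,
      h (r.1 x + (y - r.1 y)) ≤ (r.2 : EReal) * h x + ((1 - r.2 : ℝ) : EReal) * h y := by
  intro r hr x hx y hy
  obtain ⟨ht0, ht1⟩ := hR01 r hr
  set T := r.1 with hT
  set t := r.2 with htdef
  have hs0 : (0 : ℝ) ≤ 1 - t := by linarith
  set z := T x + (y - T y) with hz
  -- the key pointwise bound
  have key : ∀ m₁ ∈ {m : EReal | ∃ u ∈ D, ∃ v ∈ E, u + v = x ∧ m = f u + g v},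
      ∀ m₂ ∈ {m : EReal | ∃ u ∈ D, ∃ v ∈ E, u + v = y ∧ m = f u + g v},
      h z ≤ (t : EReal) * m₁ + ((1 - t : ℝ) : EReal) * m₂ := by
    rintro m₁ ⟨u₁, hu₁, v₁, hv₁, hxs, rfl⟩ m₂ ⟨u₂, hu₂, v₂, hv₂, hys, rfl⟩
    have hu₀ : T u₁ + (u₂ - T u₂) ∈ D := hD r hr u₁ hu₁ u₂ hu₂
    have hv₀ : T v₁ + (v₂ - T v₂) ∈ E := hE r hr v₁ hv₁ v₂ hv₂
    have hsum : (T u₁ + (u₂ - T u₂)) + (T v₁ + (v₂ - T v₂)) = z := by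
      rw [hz, ← hxs, ← hys]
      simp only [map_add]
      abel
    have h1 : h z ≤ f (T u₁ + (u₂ - T u₂)) + g (T v₁ + (v₂ - T v₂)) := by
      rw [hdef z]
      exact sInf_le ⟨_, hu₀, _, hv₀, hsum, rfl⟩
    have h2 : f (T u₁ + (u₂ - T u₂)) + g (T v₁ + (v₂ - T v₂)) ≤
        ((t : EReal) * f u₁ + ((1 - t : ℝ) : EReal) * f u₂) +
        ((t : EReal) * g v₁ + ((1 - t : ℝ) : EReal) * g v₂) :=
      add_le_add (hf r hr u₁ hu₁ u₂ hu₂) (hg r hr v₁ hv₁ v₂ hv₂)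
    have h3 : ((t : EReal) * f u₁ + ((1 - t : ℝ) : EReal) * f u₂) +
        ((t : EReal) * g v₁ + ((1 - t : ℝ) : EReal) * g v₂) =
        (t : EReal) * (f u₁ + g v₁) + ((1 - t : ℝ) : EReal) * (f u₂ + g v₂) := by
      rw [aux_mul_add t ht0 (hftop u₁ hu₁) (hgtop v₁ hv₁),
        aux_mul_add (1 - t) hs0 (hftop u₂ hu₂) (hgtop v₂ hv₂)]
      exact add_add_add_comm _ _ _ _
    calc h z ≤ _ := h1
      _ ≤ _ := h2
      _ = _ := h3
  -- now pass to the infima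
  rw [hdef x, hdef y]
  refine EReal.le_add_of_forall_gt ?_ ?_ ?_
  · right
    exact aux_mul_ne_top (1 - t) hs0 (hdef y ▸ hhtop y hy)
  · left
    exact aux_mul_ne_top t ht0 (hdef x ▸ hhtop x hx)
  · intro a' ha' b' hb'
    have hm₁ : ∃ m₁ ∈ {m : EReal | ∃ u ∈ D, ∃ v ∈ E, u + v = x ∧ m = f u + g v},
        (t : EReal) * m₁ ≤ a' := by
      rcases ht0.eq_or_lt with heq | htpos
      · have ht00 : (t : EReal) = 0 := by exact_mod_cast heq.symm
        obtain ⟨u, hu, v, hv, rfl⟩ := hx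
        refine ⟨f u + g v, ⟨u, hu, v, hv, rfl, rfl⟩, ?_⟩
        rw [ht00, zero_mul] at ha' ⊢
        exact le_of_lt ha'
      · obtain ⟨m, hm, hlt⟩ := aux_exists_lt t htpos _ ha'
        exact ⟨m, hm, hlt.le⟩
    have hm₂ : ∃ m₂ ∈ {m : EReal | ∃ u ∈ D, ∃ v ∈ E, u + v = y ∧ m = f u + g v},
        ((1 - t : ℝ) : EReal) * m₂ ≤ b' := by
      rcases hs0.eq_or_lt with hseq | hspos
      · have hs00 : ((1 - t : ℝ) : EReal) = 0 := by exact_mod_cast hseq.symm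
        obtain ⟨u, hu, v, hv, rfl⟩ := hy
        refine ⟨f u + g v, ⟨u, hu, v, hv, rfl, rfl⟩, ?_⟩
        rw [hs00, zero_mul] at hb' ⊢
        exact le_of_lt hb'
      · obtain ⟨m, hm, hlt⟩ := aux_exists_lt (1 - t) hspos _ hb'
        exact ⟨m, hm, hlt.le⟩
    obtain ⟨m₁, hm₁mem, hm₁le⟩ := hm₁
    obtain ⟨m₂, hm₂mem, hm₂le⟩ := hm₂
    exact (key m₁ hm₁mem m₂ hm₂mem).trans (add_le_add hm₁le hm₂le)
end

section
/- If f : D → [-∞,+∞) is (T,t)-convex, (T₁,t₁)-convex and (T₂,t₂)-convex (with T, T₁, T₂ endomorphisms of X and t, t₁, t₂ ∈ [0,1]), then f is (S,s)-convex where S := T∘T₁ + (I−T)∘T₂ and s := t·t₁ + (1−t)·t₂. -/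
lemma ereal_coe_mul_add {r : ℝ} (hr : 0 ≤ r) (a b : EReal) :
    (r : EReal) * (a + b) = (r : EReal) * a + (r : EReal) * b := by
  rcases eq_or_lt_of_le hr with rfl | hr
  · simp
  have hr' : (0 : EReal) < (r : EReal) := by exact_mod_cast hr
  induction a with
  | bot => simp [EReal.mul_bot_of_pos hr']
  | top =>
    induction b with
    | bot => simp [EReal.mul_bot_of_pos hr', EReal.mul_top_of_pos hr']
    | top => simp [EReal.mul_top_of_pos hr']
    | coe b =>
      rw [EReal.top_add_of_ne_bot (EReal.coe_ne_bot b), EReal.mul_top_of_pos hr', ← EReal.coe_mul,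
        EReal.top_add_of_ne_bot (EReal.coe_ne_bot _)]
  | coe a =>
    induction b with
    | bot => simp [EReal.mul_bot_of_pos hr', ← EReal.coe_mul]
    | top =>
      rw [EReal.add_top_of_ne_bot (EReal.coe_ne_bot a), EReal.mul_top_of_pos hr', ← EReal.coe_mul,
        EReal.add_top_of_ne_bot (EReal.coe_ne_bot _)]
    | coe b => norm_cast; ring

lemma ereal_coe_mul_mul (r q : ℝ) (a : EReal) :
    (r : EReal) * ((q : EReal) * a) = ((r * q : ℝ) : EReal) * a := by
  rw [EReal.coe_mul, mul_assoc]

/-- If `f` is `(T,t)`-, `(T₁,t₁)`- and `(T₂,t₂)`-convex, then `f`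
is `(S,s)`-convex with `S = T∘T₁ + (I−T)∘T₂` and `s = t·t₁ + (1−t)·t₂`. -/
theorem stmt17 {X : Type*} [AddCommGroup X] (D : Set X) (f : X → EReal)
    (T T₁ T₂ : X →+ X) (t t₁ t₂ : ℝ)
    (ht : t ∈ Set.Icc (0 : ℝ) 1) (ht₁ : t₁ ∈ Set.Icc (0 : ℝ) 1)
    (ht₂ : t₂ ∈ Set.Icc (0 : ℝ) 1)
    (hDT : ∀ x ∈ D, ∀ y ∈ D, T x + (y - T y) ∈ D)
    (hDT₁ : ∀ x ∈ D, ∀ y ∈ D, T₁ x + (y - T₁ y) ∈ D)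
    (hDT₂ : ∀ x ∈ D, ∀ y ∈ D, T₂ x + (y - T₂ y) ∈ D)
    (hT : ∀ x ∈ D, ∀ y ∈ D,
      f (T x + (y - T y)) ≤ (t : EReal) * f x + ((1 - t : ℝ) : EReal) * f y)
    (hT₁ : ∀ x ∈ D, ∀ y ∈ D,
      f (T₁ x + (y - T₁ y)) ≤ (t₁ : EReal) * f x + ((1 - t₁ : ℝ) : EReal) * f y)
    (hT₂ : ∀ x ∈ D, ∀ y ∈ D,
      f (T₂ x + (y - T₂ y)) ≤ (t₂ : EReal) * f x + ((1 - t₂ : ℝ) : EReal) * f y)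
    (S : X →+ X) (hS : S = T.comp T₁ + (AddMonoidHom.id X - T).comp T₂)
    (s : ℝ) (hs : s = t * t₁ + (1 - t) * t₂) :
    (∀ x ∈ D, ∀ y ∈ D, S x + (y - S y) ∈ D) ∧
    (∀ x ∈ D, ∀ y ∈ D,
      f (S x + (y - S y)) ≤ (s : EReal) * f x + ((1 - s : ℝ) : EReal) * f y) := by
  obtain ⟨ht0, ht1⟩ := ht
  obtain ⟨ht₁0, ht₁1⟩ := ht₁
  obtain ⟨ht₂0, ht₂1⟩ := ht₂
  -- the key algebraic identity
  have key : ∀ x y : X,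
      S x + (y - S y) =
        T (T₁ x + (y - T₁ y)) +
          ((T₂ x + (y - T₂ y)) - T (T₂ x + (y - T₂ y))) := by
    intro x y
    simp only [hS, AddMonoidHom.add_apply, AddMonoidHom.comp_apply,
      AddMonoidHom.sub_apply, AddMonoidHom.id_apply, map_add, map_sub]
    abel
  constructor
  · intro x hx y hy
    rw [key x y]
    exact hDT _ (hDT₁ x hx y hy) _ (hDT₂ x hx y hy)
  · intro x hx y hy
    have hu : T₁ x + (y - T₁ y) ∈ D := hDT₁ x hx y hy
    have hv : T₂ x + (y - T₂ y) ∈ D := hDT₂ x hx y hy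
    have h1 := hT _ hu _ hv
    have h2 := hT₁ x hx y hy
    have h3 := hT₂ x hx y hy
    have htc : (0 : EReal) ≤ ((t : ℝ) : EReal) := by exact_mod_cast ht0
    have htc' : (0 : EReal) ≤ (((1 - t : ℝ)) : EReal) := by
      exact_mod_cast (sub_nonneg.mpr ht1)
    rw [key x y]
    refine h1.trans ?_
    have h2' : (t : EReal) * f (T₁ x + (y - T₁ y)) ≤
        ((t * t₁ : ℝ) : EReal) * f x + ((t * (1 - t₁) : ℝ) : EReal) * f y := by
      calc (t : EReal) * f (T₁ x + (y - T₁ y))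
          ≤ (t : EReal) * ((t₁ : EReal) * f x + ((1 - t₁ : ℝ) : EReal) * f y) :=
            mul_le_mul_of_nonneg_left h2 htc
        _ = ((t * t₁ : ℝ) : EReal) * f x + ((t * (1 - t₁) : ℝ) : EReal) * f y := by
            rw [ereal_coe_mul_add ht0, ereal_coe_mul_mul, ereal_coe_mul_mul]
    have h3' : (((1 - t : ℝ)) : EReal) * f (T₂ x + (y - T₂ y)) ≤
        (((1 - t) * t₂ : ℝ) : EReal) * f x + (((1 - t) * (1 - t₂) : ℝ) : EReal) * f y := by
      calc (((1 - t : ℝ)) : EReal) * f (T₂ x + (y - T₂ y))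
          ≤ (((1 - t : ℝ)) : EReal) * ((t₂ : EReal) * f x + ((1 - t₂ : ℝ) : EReal) * f y) :=
            mul_le_mul_of_nonneg_left h3 htc'
        _ = (((1 - t) * t₂ : ℝ) : EReal) * f x + (((1 - t) * (1 - t₂) : ℝ) : EReal) * f y := by
            rw [ereal_coe_mul_add (sub_nonneg.mpr ht1), ereal_coe_mul_mul, ereal_coe_mul_mul]
    refine (add_le_add h2' h3').trans_eq ?_
    have e1 : ((s : ℝ) : EReal) * f x =
        ((t * t₁ : ℝ) : EReal) * f x + (((1 - t) * t₂ : ℝ) : EReal) * f x := by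
      rw [← EReal.right_distrib_of_nonneg (by exact_mod_cast mul_nonneg ht0 ht₁0)
        (by exact_mod_cast mul_nonneg (sub_nonneg.mpr ht1) ht₂0), ← EReal.coe_add, hs]
    have e2 : (((1 - s : ℝ)) : EReal) * f y =
        ((t * (1 - t₁) : ℝ) : EReal) * f y + (((1 - t) * (1 - t₂) : ℝ) : EReal) * f y := by
      rw [← EReal.right_distrib_of_nonneg
        (by exact_mod_cast mul_nonneg ht0 (sub_nonneg.mpr ht₁1))
        (by exact_mod_cast mul_nonneg (sub_nonneg.mpr ht1) (sub_nonneg.mpr ht₂1)),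
        ← EReal.coe_add]
      congr 2
      rw [hs]; ring
    rw [e1, e2]
    abel
end
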